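/- arXiv:2402.08435 — 2 statements merged into one kernel-verified Lean document; each statement's English description precedes it below -/
import Mathlib

section
/- The unital C*-algebra generated by the weakly monotone position operators {X_i = A_i + A_i† : i ∈ ℤ} acts irreducibly on the weakly monotone Fock space F_wm(ℓ²(ℤ)); equivalently, its commutant is ℂ·I. -/
open scoped ComplexOrder

/-- Index set for the orthonormal basis of the weakly monotone Fock space over `ℓ²(ℤ)`:
decreasing (finite) lists of integers; the empty list corresponds to the vacuum. -/
def WMIdx : Type := {l : List ℤ // l.Chain' (· ≥ ·)}

/-- `i` may be created on top of the tensor indexed by `l`. -/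
def WMIdx.ok (i : ℤ) (l : WMIdx) : Prop := ∀ j ∈ l.1.head?, i ≥ j

def WMIdx.cons (i : ℤ) (l : WMIdx) (h : WMIdx.ok i l) : WMIdx :=
  ⟨i :: l.1, List.isChain_cons.mpr ⟨h, l.2⟩⟩

def WMIdx.vac : WMIdx := ⟨[], List.isChain_nil⟩

/- ### Auxiliary material -/

open scoped InnerProductSpace
open Filter Topology

noncomputable section

namespace WMIrr

instance : DecidableEq WMIdx := fun a c =>
  decidable_of_iff (a.1 = c.1) Subtype.ext_iff.symm

/-- the index `[i, i]`. -/
def dbl (i : ℤ) : WMIdx := ⟨[i, i], List.isChain_pair.mpr le_rfl⟩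

lemma dbl_inj : Function.Injective dbl := by
  intro i j h
  have := congrArg Subtype.val h
  simp [dbl] at this
  exact this

lemma ok_vac (i : ℤ) : WMIdx.ok i WMIdx.vac := by
  intro j hj
  simp [WMIdx.vac] at hj

/-- the index `[i]`. -/
def single (i : ℤ) : WMIdx := WMIdx.cons i WMIdx.vac (ok_vac i)

lemma ok_self (i : ℤ) : WMIdx.ok i (single i) := by
  intro j hj
  simp [single, WMIdx.cons, WMIdx.vac] at hj
  omega

lemma cons_single (i : ℤ) : WMIdx.cons i (single i) (ok_self i) = dbl i :=
  Subtype.ext rfl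

variable {H : Type} [NormedAddCommGroup H] [InnerProductSpace ℂ H] [CompleteSpace H]
  (b : HilbertBasis WMIdx ℂ H) (C : ℤ → H →L[ℂ] H)

lemma inner_bb (m l : WMIdx) : ⟪b m, b l⟫_ℂ = if m = l then 1 else 0 :=
  orthonormal_iff_ite.mp b.orthonormal m l

lemma hext {v w : H} (h : ∀ m, ⟪b m, v⟫_ℂ = ⟪b m, w⟫_ℂ) : v = w :=
  b.repr.injective (lp.ext (funext fun m => by
    rw [b.repr_apply_apply, b.repr_apply_apply]; exact h m))

variable (hC : ∀ i l (h : WMIdx.ok i l), C i (b l) = b (WMIdx.cons i l h))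
  (hC0 : ∀ i l, ¬ WMIdx.ok i l → C i (b l) = 0)

include hC hC0

lemma adj_cons (i : ℤ) (l : WMIdx) (h : WMIdx.ok i l) :
    ContinuousLinearMap.adjoint (C i) (b (WMIdx.cons i l h)) = b l := by
  refine hext b fun m => ?_
  rw [ContinuousLinearMap.adjoint_inner_right]
  by_cases hok : WMIdx.ok i m
  · rw [hC i m hok, inner_bb, inner_bb]
    by_cases hml : m = l
    · subst hml; rw [if_pos rfl, if_pos rfl]
    · rw [if_neg hml, if_neg (fun hcn => hml (by
        have := congrArg Subtype.val hcn
        simp [WMIdx.cons] at this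
        exact Subtype.ext this))]
  · rw [hC0 i m hok, inner_zero_left, inner_bb, if_neg]
    rintro rfl
    exact hok h

lemma adj_ne (i : ℤ) (l : WMIdx) (hne : l.1.head? ≠ some i) :
    ContinuousLinearMap.adjoint (C i) (b l) = 0 := by
  refine hext b fun m => ?_
  rw [ContinuousLinearMap.adjoint_inner_right, inner_zero_right]
  by_cases hok : WMIdx.ok i m
  · rw [hC i m hok, inner_bb, if_neg]
    rintro rfl
    exact hne rfl
  · rw [hC0 i m hok, inner_zero_left]

end WMIrr

end

/-- the unital C*-algebra generated by the position operators
`X_i = A_i + A_i†` acts irreducibly: its commutant is `ℂ·I`. -/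
theorem wm_selfadjoint_subalgebra_irreducible {H : Type} [NormedAddCommGroup H] [InnerProductSpace ℂ H] [CompleteSpace H]
    (b : HilbertBasis WMIdx ℂ H) (C : ℤ → H →L[ℂ] H)
    (hC : ∀ i l (h : WMIdx.ok i l), C i (b l) = b (WMIdx.cons i l h))
    (hC0 : ∀ i l, ¬ WMIdx.ok i l → C i (b l) = 0) :
    {T : H →L[ℂ] H | ∀ S ∈ (StarAlgebra.adjoin ℂ
        (Set.range fun i : ℤ =>
          ContinuousLinearMap.adjoint (C i) + C i)).topologicalClosure,
      Commute T S} = Set.range fun c : ℂ => c • (1 : H →L[ℂ] H) := by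
  classical
  set X : ℤ → H →L[ℂ] H := fun i => ContinuousLinearMap.adjoint (C i) + C i with hXdef
  -- self-adjointness of X i
  have hsa : ∀ i, ContinuousLinearMap.adjoint (X i) = X i := by
    intro i
    show ContinuousLinearMap.adjoint (ContinuousLinearMap.adjoint (C i) + C i) = _
    rw [map_add, ContinuousLinearMap.adjoint_adjoint, add_comm]
  have hmove : ∀ i (x y : H), ⟪X i x, y⟫_ℂ = ⟪x, X i y⟫_ℂ := by
    intro i x y
    conv_lhs => rw [← hsa i]
    exact ContinuousLinearMap.adjoint_inner_left (X i) y x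
  -- action facts
  have hXvac : ∀ i, X i (b WMIdx.vac) = b (WMIrr.single i) := by
    intro i
    have h1 : ContinuousLinearMap.adjoint (C i) (b WMIdx.vac) = 0 :=
      WMIrr.adj_ne b C hC hC0 i WMIdx.vac (by simp [WMIdx.vac])
    simp [hXdef, ContinuousLinearMap.add_apply, h1, hC i WMIdx.vac (WMIrr.ok_vac i),
      WMIrr.single]
  have hXsingle : ∀ i, X i (b (WMIrr.single i)) = b (WMIrr.dbl i) + b WMIdx.vac := by
    intro i
    have h1 : ContinuousLinearMap.adjoint (C i) (b (WMIrr.single i)) = b WMIdx.vac :=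
      WMIrr.adj_cons b C hC hC0 i WMIdx.vac (WMIrr.ok_vac i)
    have h2 : C i (b (WMIrr.single i)) = b (WMIrr.dbl i) := by
      rw [hC i (WMIrr.single i) (WMIrr.ok_self i), WMIrr.cons_single]
    simp [hXdef, ContinuousLinearMap.add_apply, h1, h2, add_comm]
  have hXdead : ∀ i (m : WMIdx) j, m.1.head? = some j → i < j → X i (b m) = 0 := by
    intro i m j hmj hij
    have h1 : ContinuousLinearMap.adjoint (C i) (b m) = 0 := by
      refine WMIrr.adj_ne b C hC hC0 i m ?_
      rw [hmj]
      intro hcon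
      exact absurd (Option.some_injective _ hcon) (by omega)
    have h2 : C i (b m) = 0 := by
      refine hC0 i m fun hok => ?_
      have := hok j (by rw [hmj]; rfl)
      omega
    simp [hXdef, ContinuousLinearMap.add_apply, h1, h2]
  ext T
  simp only [Set.mem_setOf_eq, Set.mem_range]
  constructor
  · intro hT
    have hX : ∀ i, Commute T (X i) := fun i =>
      hT _ ((StarAlgebra.adjoin ℂ _).le_topologicalClosure
        (StarAlgebra.subset_adjoin ℂ _ ⟨i, rfl⟩))
    have hXapp : ∀ i (x : H), T (X i x) = X i (T x) := by
      intro i x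
      have := DFunLike.congr_fun (hX i).eq x
      simpa [ContinuousLinearMap.mul_apply] using this
    set c : ℂ := ⟪b WMIdx.vac, T (b WMIdx.vac)⟫_ℂ with hc
    -- the vacuum vector is an eigenvector
    have hvac : T (b WMIdx.vac) = c • b WMIdx.vac := by
      refine WMIrr.hext b fun m => ?_
      rw [inner_smul_right, WMIrr.inner_bb]
      by_cases hm : m = WMIdx.vac
      · subst hm; rw [if_pos rfl, mul_one]
      · rw [if_neg hm, mul_zero]
        -- limit argument: ⟪b m, T (b vac)⟫ = -⟪b m, T (b [i,i])⟫ for all very negative i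
        obtain ⟨j, hm1⟩ : ∃ j, m.1.head? = some j := by
          cases hmm : m.1 with
          | nil => exact absurd (Subtype.ext hmm) hm
          | cons a u => exact ⟨a, rfl⟩
        set x : H := ContinuousLinearMap.adjoint T (b m) with hx
        set f : ℤ → ℂ := fun i => ⟪b m, T (b (WMIrr.dbl i))⟫_ℂ with hfdef
        have hf : ∀ i, f i = ⟪x, b (WMIrr.dbl i)⟫_ℂ := fun i =>
          (ContinuousLinearMap.adjoint_inner_left T (b (WMIrr.dbl i)) (b m)).symm
        have hsum : Summable fun i : ℤ =>
            ⟪x, b (WMIrr.dbl i)⟫_ℂ * ⟪b (WMIrr.dbl i), x⟫_ℂ :=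
          (b.summable_inner_mul_inner x x).comp_injective WMIrr.dbl_inj
        have h0 : Tendsto f cofinite (𝓝 0) := by
          rw [tendsto_zero_iff_norm_tendsto_zero]
          have h1 : Tendsto
              (fun i : ℤ => ‖⟪x, b (WMIrr.dbl i)⟫_ℂ * ⟪b (WMIrr.dbl i), x⟫_ℂ‖)
              cofinite (𝓝 0) :=
            tendsto_norm_zero.comp hsum.tendsto_cofinite_zero
          have h2 := (Real.continuous_sqrt.tendsto 0).comp h1
          rw [Real.sqrt_zero] at h2
          refine h2.congr fun i => ?_
          show Real.sqrt ‖_ * _‖ = ‖f i‖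
          rw [hf i, ← inner_conj_symm x (b (WMIrr.dbl i)), norm_mul,
            RCLike.norm_conj, Real.sqrt_mul_self (norm_nonneg _)]
        have h2 : Tendsto f atBot (𝓝 0) :=
          h0.mono_left (by rw [Int.cofinite_eq]; exact le_sup_left)
        have h3 : ∀ i, i < j → ⟪b m, T (b WMIdx.vac)⟫_ℂ = -f i := by
          intro i hij
          have hcomm : Commute T (X i * X i) := (hX i).mul_right (hX i)
          have happ := DFunLike.congr_fun hcomm.eq (b WMIdx.vac)
          simp only [ContinuousLinearMap.mul_apply] at happ
          rw [hXvac, hXsingle] at happ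
          -- happ : T (b dbl + b vac) = X i (X i (T (b vac)))
          have hL : ⟪b m, T (b (WMIrr.dbl i) + b WMIdx.vac)⟫_ℂ
              = f i + ⟪b m, T (b WMIdx.vac)⟫_ℂ := by
            rw [map_add, inner_add_right]
          have hR : ⟪b m, X i (X i (T (b WMIdx.vac)))⟫_ℂ = 0 := by
            rw [← hmove, ← hmove, hXdead i m j hm1 hij]
            simp
          have := hL.symm.trans (by rw [happ, hR])
          linear_combination this
        have hconst : Tendsto (fun _ : ℤ => ⟪b m, T (b WMIdx.vac)⟫_ℂ) atBot (𝓝 0) := by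
          have h2' : Tendsto (fun i => -f i) atBot (𝓝 0) := by simpa using h2.neg
          refine h2'.congr' ?_
          filter_upwards [eventually_lt_atBot j] with i hi
          exact (h3 i hi).symm
        exact (tendsto_nhds_unique tendsto_const_nhds hconst)
    -- every basis vector is an eigenvector, by induction on the length of the index
    have hall : ∀ n (l : WMIdx), l.1.length ≤ n → T (b l) = c • b l := by
      intro n
      induction n with
      | zero =>
        intro l hl
        have : l = WMIdx.vac := Subtype.ext (List.length_eq_zero_iff.mp (Nat.le_zero.mp hl))
        rw [this]; exact hvac
      | succ n ih =>
        intro l hl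
        cases hl1 : l.1 with
        | nil =>
          have : l = WMIdx.vac := Subtype.ext hl1
          rw [this]; exact hvac
        | cons i t =>
          have hchain : List.Chain' (· ≥ ·) (i :: t) := hl1 ▸ l.2
          have hcc := List.isChain_cons.mp hchain
          have hok : WMIdx.ok i ⟨t, hcc.2⟩ := hcc.1
          have hlcons : l = WMIdx.cons i ⟨t, hcc.2⟩ hok := Subtype.ext hl1
          have hlen : t.length ≤ n := by
            rw [hl1] at hl
            simpa using Nat.succ_le_succ_iff.mp hl
          have hTt' : T (b ⟨t, hcc.2⟩) = c • b ⟨t, hcc.2⟩ := ih ⟨t, hcc.2⟩ hlen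
          have hTadj : T (ContinuousLinearMap.adjoint (C i) (b ⟨t, hcc.2⟩))
              = c • ContinuousLinearMap.adjoint (C i) (b ⟨t, hcc.2⟩) := by
            by_cases hhead : t.head? = some i
            · obtain ⟨u, hu⟩ : ∃ u, t = i :: u := by
                cases t with
                | nil => simp at hhead
                | cons a u =>
                  simp only [List.head?_cons, Option.some.injEq] at hhead
                  exact ⟨u, by rw [hhead]⟩
              subst hu
              have hcc2 := List.isChain_cons.mp hcc.2
              have hok2 : WMIdx.ok i ⟨u, hcc2.2⟩ := hcc2.1
              have ht'c : (⟨i :: u, hcc.2⟩ : WMIdx) = WMIdx.cons i ⟨u, hcc2.2⟩ hok2 :=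
                Subtype.ext rfl
              have hlen2 : u.length ≤ n := by
                simp only [List.length_cons] at hlen
                omega
              rw [ht'c, WMIrr.adj_cons b C hC hC0 i ⟨u, hcc2.2⟩ hok2]
              exact ih ⟨u, hcc2.2⟩ hlen2
            · rw [WMIrr.adj_ne b C hC hC0 i ⟨t, hcc.2⟩ hhead]
              simp
          have hXbt : X i (b ⟨t, hcc.2⟩)
              = ContinuousLinearMap.adjoint (C i) (b ⟨t, hcc.2⟩) + b l := by
            rw [hlcons]
            simp [hXdef, ContinuousLinearMap.add_apply, hC i ⟨t, hcc.2⟩ hok]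
          have hbl : b l = X i (b ⟨t, hcc.2⟩)
              - ContinuousLinearMap.adjoint (C i) (b ⟨t, hcc.2⟩) := by
            rw [hXbt]; abel
          rw [hbl, map_sub, hXapp, hTt', hTadj, map_smul, smul_sub]
      -- end induction
    refine ⟨c, ?_⟩
    have hdense : Dense ((Submodule.span ℂ (Set.range b) : Submodule ℂ H) : Set H) :=
      Submodule.dense_iff_topologicalClosure_eq_top.mpr b.dense_span
    refine (ContinuousLinearMap.ext_on hdense ?_).symm
    rintro v ⟨l, rfl⟩
    show T (b l) = (c • (1 : H →L[ℂ] H)) (b l)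
    rw [hall l.1.length l le_rfl]
    simp
  · rintro ⟨c, rfl⟩
    intro S hS
    show (c • (1 : H →L[ℂ] H)) * S = S * (c • 1)
    simp [smul_mul_assoc, mul_smul_comm]
end

section
/- If π is a representation of the universal C*-algebra O_{A_ℕ} on F_wm(ℓ²(ℕ)) satisfying π(s_i) = A_i† for all i ≥ 1, then π(s_0) = z P_Ω for some complex number z with |z| = 1. -/
open scoped ComplexOrder

def WMIdxN : Type := {l : List ℕ+ // l.Chain' (· ≥ ·)}

def WMIdxN.ok (i : ℕ+) (l : WMIdxN) : Prop := ∀ j ∈ l.1.head?, i ≥ j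

def WMIdxN.cons (i : ℕ+) (l : WMIdxN) (h : WMIdxN.ok i l) : WMIdxN :=
  ⟨i :: l.1, List.isChain_cons.mpr ⟨h, l.2⟩⟩

def WMIdxN.vac : WMIdxN := ⟨[], List.isChain_nil⟩

noncomputable instance : DecidableEq WMIdxN := Classical.decEq _

section Aux

set_option linter.unusedSectionVars false

local notation "⟪" x ", " y "⟫" => @inner ℂ _ _ x y

variable {H : Type} [NormedAddCommGroup H] [InnerProductSpace ℂ H] [CompleteSpace H]
  (b : HilbertBasis WMIdxN ℂ H)

lemma b_ext_inner {x y : H} (h : ∀ l, ⟪b l, x⟫ = ⟪b l, y⟫) : x = y := by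
  apply b.repr.injective
  ext l
  rw [b.repr_apply_apply, b.repr_apply_apply, h]

lemma b_inner (l m : WMIdxN) : ⟪b l, b m⟫ = if l = m then 1 else 0 :=
  orthonormal_iff_ite.mp b.orthonormal l m

lemma clm_ext {f g : H →L[ℂ] H} (h : ∀ l, f (b l) = g (b l)) : f = g := by
  refine ContinuousLinearMap.ext_on
    (Submodule.dense_iff_topologicalClosure_eq_top.mpr b.dense_span) ?_
  rintro x ⟨l, rfl⟩
  exact h l

variable (C : ℕ+ → H →L[ℂ] H)
  (hC : ∀ i l (h : WMIdxN.ok i l), C i (b l) = b (WMIdxN.cons i l h))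
  (hC0 : ∀ i l, ¬ WMIdxN.ok i l → C i (b l) = 0)

include hC hC0 in
lemma adj_cons (i : ℕ+) (l : WMIdxN) (h : WMIdxN.ok i l) :
    star (C i) (b (WMIdxN.cons i l h)) = b l := by
  apply b_ext_inner b
  intro m
  rw [ContinuousLinearMap.star_eq_adjoint, ContinuousLinearMap.adjoint_inner_right]
  by_cases hm : WMIdxN.ok i m
  · rw [hC i m hm, b_inner, b_inner]
    by_cases hml : m = l
    · subst hml
      rw [if_pos rfl, if_pos rfl]
    · have hne : WMIdxN.cons i m hm ≠ WMIdxN.cons i l h := by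
        intro he
        apply hml
        have := congrArg Subtype.val he
        simp only [WMIdxN.cons, List.cons.injEq] at this
        exact Subtype.ext this.2
      rw [if_neg hne, if_neg hml]
  · rw [hC0 i m hm, inner_zero_left, b_inner]
    have hne : m ≠ l := by rintro rfl; exact hm h
    rw [if_neg hne]

include hC hC0 in
lemma adj_zero (i : ℕ+) (l : WMIdxN) (h : l.1.head? ≠ some i) :
    star (C i) (b l) = 0 := by
  apply b_ext_inner b
  intro m
  rw [ContinuousLinearMap.star_eq_adjoint, ContinuousLinearMap.adjoint_inner_right,
    inner_zero_right]
  by_cases hm : WMIdxN.ok i m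
  · rw [hC i m hm, b_inner]
    have hne : WMIdxN.cons i m hm ≠ l := by
      intro he
      apply h
      rw [← he]
      rfl
    rw [if_neg hne]
  · rw [hC0 i m hm, inner_zero_left]

include hC hC0 in
lemma key : star (C 1) * C 1 - C 1 * star (C 1)
    = ((innerSL ℂ (b WMIdxN.vac)).smulRight (b WMIdxN.vac)) := by
  apply clm_ext b
  intro l
  rw [ContinuousLinearMap.sub_apply, ContinuousLinearMap.mul_apply,
    ContinuousLinearMap.mul_apply, ContinuousLinearMap.smulRight_apply, innerSL_apply_apply,
    b_inner]
  obtain ⟨ls, hl⟩ := l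
  match ls, hl with
  | [], hl =>
    have hvac : (⟨[], hl⟩ : WMIdxN) = WMIdxN.vac := rfl
    rw [hvac, if_pos rfl, one_smul]
    have hok : WMIdxN.ok 1 WMIdxN.vac := by intro j hj; simp [WMIdxN.vac] at hj
    rw [hC 1 _ hok, adj_cons b C hC hC0,
      adj_zero b C hC hC0 1 WMIdxN.vac (by simp [WMIdxN.vac]), map_zero, sub_zero]
  | (j :: t), hl =>
    have ht : (t : List ℕ+).Chain' (· ≥ ·) := (List.isChain_cons.mp hl).2
    have hokjt : WMIdxN.ok j ⟨t, ht⟩ := (List.isChain_cons.mp hl).1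
    have hne : WMIdxN.vac ≠ (⟨j :: t, hl⟩ : WMIdxN) := by
      intro he
      exact List.cons_ne_nil j t (congrArg Subtype.val he).symm
    rw [if_neg hne, zero_smul]
    by_cases hj : j = 1
    · subst hj
      have hcons : (⟨(1 : ℕ+) :: t, hl⟩ : WMIdxN) = WMIdxN.cons 1 ⟨t, ht⟩ hokjt := rfl
      have hok1 : WMIdxN.ok 1 (⟨(1 : ℕ+) :: t, hl⟩ : WMIdxN) := by
        intro x hx
        simp only [List.head?, Option.mem_def, Option.some.injEq] at hx
        rw [← hx]
      rw [hC 1 _ hok1, adj_cons b C hC hC0 1 _ hok1, hcons, adj_cons b C hC hC0 1 _ hokjt, hC 1 _ hokjt, ← hcons,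
        sub_self]
    · have hnok : ¬ WMIdxN.ok 1 (⟨j :: t, hl⟩ : WMIdxN) := by
        intro hok
        have h1j := hok j (by simp [List.head?])
        exact hj (le_antisymm h1j j.one_le)
      have hhead : (⟨j :: t, hl⟩ : WMIdxN).1.head? ≠ some 1 := by
        simp only [List.head?, ne_eq, Option.some.injEq]
        exact hj
      rw [hC0 1 _ hnok, map_zero, adj_zero b C hC hC0 1 _ hhead, map_zero, sub_self]

end Aux

/-- if `π` is a representation of `O_{A_ℕ}` on the weakly monotone Fock
space over `ℓ²(ℕ)` (encoded as operators `T i = π(s_i)` satisfying the defining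
relations) with `π(s_i) = A_i†` for all `i ≥ 1`, then `π(s_0) = z P_Ω` for some
unimodular `z ∈ ℂ`. -/
theorem wm_nat_rep_value_at_s0 {H : Type} [NormedAddCommGroup H] [InnerProductSpace ℂ H] [CompleteSpace H]
    (b : HilbertBasis WMIdxN ℂ H) (C : ℕ+ → H →L[ℂ] H)
    (hC : ∀ i l (h : WMIdxN.ok i l), C i (b l) = b (WMIdxN.cons i l h))
    (hC0 : ∀ i l, ¬ WMIdxN.ok i l → C i (b l) = 0)
    (T : ℕ → H →L[ℂ] H)
    (hpi : ∀ i, T i * star (T i) * T i = T i)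
    (horth : ∀ i j, i ≠ j → star (T i) * T j = 0)
    (hsum : ∀ i, star (T i) * T i = ∑ k ∈ Finset.range (i + 1), T k * star (T k))
    (hT : ∀ i : ℕ+, T (i : ℕ) = C i) :
    ∃ z : ℂ, ‖z‖ = 1 ∧
      T 0 = z • ((innerSL ℂ (b WMIdxN.vac)).smulRight (b WMIdxN.vac)) := by
  have hΩnorm : ‖b WMIdxN.vac‖ = 1 := b.orthonormal.1 WMIdxN.vac
  have hΩinner : @inner ℂ _ _ (b WMIdxN.vac) (b WMIdxN.vac) = 1 := by
    rw [b_inner, if_pos rfl]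
  have h1 : T 0 * star (T 0) = (innerSL ℂ (b WMIdxN.vac)).smulRight (b WMIdxN.vac) := by
    have hT1 : T 1 = C 1 := by simpa using hT 1
    have hs1 := hsum 1
    rw [Finset.sum_range_succ, Finset.sum_range_one, hT1] at hs1
    have heq : T 0 * star (T 0) = star (C 1) * C 1 - C 1 * star (C 1) := by
      rw [hs1]; abel
    rw [heq, key b C hC hC0]
  have h0 : star (T 0) * T 0 = (innerSL ℂ (b WMIdxN.vac)).smulRight (b WMIdxN.vac) := by
    rw [hsum 0, Finset.sum_range_one, h1]
  have hTQ : T 0 * ((innerSL ℂ (b WMIdxN.vac)).smulRight (b WMIdxN.vac)) = T 0 := by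
    rw [← h0, ← mul_assoc]
    exact hpi 0
  have hQT : ((innerSL ℂ (b WMIdxN.vac)).smulRight (b WMIdxN.vac)) * T 0 = T 0 := by
    rw [← h1, mul_assoc]
    exact hpi 0
  have hvz : T 0 (b WMIdxN.vac)
      = (@inner ℂ _ _ (b WMIdxN.vac) (T 0 (b WMIdxN.vac))) • b WMIdxN.vac := by
    have := congrArg (fun f : H →L[ℂ] H => f (b WMIdxN.vac)) hQT
    simpa [ContinuousLinearMap.mul_apply] using this.symm
  have hvinner : @inner ℂ _ _ (T 0 (b WMIdxN.vac)) (T 0 (b WMIdxN.vac)) = 1 := by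
    calc @inner ℂ _ _ (T 0 (b WMIdxN.vac)) (T 0 (b WMIdxN.vac))
        = @inner ℂ _ _ (b WMIdxN.vac) ((star (T 0) * T 0) (b WMIdxN.vac)) := by
          rw [ContinuousLinearMap.mul_apply, ContinuousLinearMap.star_eq_adjoint,
            ContinuousLinearMap.adjoint_inner_right]
      _ = 1 := by
          rw [h0, ContinuousLinearMap.smulRight_apply, innerSL_apply_apply, hΩinner, one_smul,
            hΩinner]
  have hvnorm : ‖T 0 (b WMIdxN.vac)‖ = 1 := by
    have h2 : ‖T 0 (b WMIdxN.vac)‖ ^ 2 = RCLike.re (@inner ℂ _ _ (T 0 (b WMIdxN.vac)) (T 0 (b WMIdxN.vac))) :=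
      norm_sq_eq_re_inner _
    rw [hvinner] at h2
    simp only [RCLike.one_re] at h2
    nlinarith [norm_nonneg (T 0 (b WMIdxN.vac))]
  refine ⟨@inner ℂ _ _ (b WMIdxN.vac) (T 0 (b WMIdxN.vac)), ?_, ?_⟩
  · have hn : ‖T 0 (b WMIdxN.vac)‖
        = ‖@inner ℂ _ _ (b WMIdxN.vac) (T 0 (b WMIdxN.vac))‖ * ‖b WMIdxN.vac‖ := by
      rw [hvz, norm_smul]
      rw [← hvz]
    rw [hvnorm, hΩnorm, mul_one] at hn
    exact hn.symm
  · ext x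
    have hx := congrArg (fun f : H →L[ℂ] H => f x) hTQ
    simp only [ContinuousLinearMap.mul_apply, ContinuousLinearMap.smulRight_apply,
      innerSL_apply_apply, map_smul] at hx
    rw [ContinuousLinearMap.smul_apply, ContinuousLinearMap.smulRight_apply, innerSL_apply_apply]
    rw [← hx]
    conv_lhs => rw [hvz]
    rw [smul_comm]
end
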